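/- If G is a graph with girth greater than 3l, then every intersecting family of paths in G, each of length at most l (i.e., at most l edges), is a star. -/

import Mathlib

/-- `s` is the vertex set of a path of length (number of edges) at most `l` in `G`. -/
def IsShortPathSet {V : Type*} [DecidableEq V] (G : SimpleGraph V) (l : ℕ) (s : Finset V) : Prop :=
  ∃ (u w : V) (p : G.Walk u w), p.IsPath ∧ p.length ≤ l ∧ s = p.support.toFinset

section Aux
open SimpleGraph Walk
set_option linter.unusedSectionVars false
variable {V : Type*} [DecidableEq V] {G : SimpleGraph V} {u v w a b c x z : V}



lemma length_drop' (p : G.Walk u v) (n : ℕ) : (p.drop n).length = p.length - n := by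
  induction p generalizing n with
  | nil => cases n <;> simp [Walk.drop]
  | cons h q ih =>
    cases n with
    | zero => simp [Walk.drop]
    | succ n => simpa [Walk.drop] using ih n

lemma isPath_drop' {p : G.Walk u v} (hp : p.IsPath) (n : ℕ) : (p.drop n).IsPath := by
  induction p generalizing n with
  | nil => cases n <;> simpa [Walk.drop] using hp
  | cons h q ih =>
    cases n with
    | zero => simpa [Walk.drop] using hp
    | succ n => simpa [Walk.drop] using ih ((Walk.cons_isPath_iff _ _).mp hp).1 n

lemma getVert_drop' (p : G.Walk u v) (n m : ℕ) : (p.drop n).getVert m = p.getVert (n + m) := by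
  induction p generalizing n with
  | nil => cases n <;> rfl
  | cons h q ih =>
    cases n with
    | zero => simp [Walk.drop]
    | succ n =>
      have h1 : ((cons h q).drop (n+1)).getVert m = (q.drop n).getVert m := by
        simp [Walk.drop]
      rw [h1, ih n, show n+1+m = (n+m)+1 from by omega, Walk.getVert_cons_succ]

lemma getVert_mem_support' (p : G.Walk u v) (n : ℕ) : p.getVert n ∈ p.support := by
  by_cases h : n ≤ p.length
  · exact Walk.mem_support_iff_exists_getVert.mpr ⟨n, rfl, h⟩
  · rw [Walk.getVert_of_length_le p (by omega)]; exact Walk.end_mem_support p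

lemma isPath_getVert_inj {p : G.Walk u v} (hp : p.IsPath) {i j : ℕ} (hi : i ≤ p.length)
    (hj : j ≤ p.length) (h : p.getVert i = p.getVert j) : i = j := by
  induction p generalizing i j with
  | nil => simp at hi hj; omega
  | cons hadj q ih =>
    have hq := (Walk.cons_isPath_iff _ _).mp hp
    cases i with
    | zero =>
      cases j with
      | zero => rfl
      | succ j =>
        rw [Walk.getVert_zero, Walk.getVert_cons_succ] at h
        exact absurd (h ▸ getVert_mem_support' q j) hq.2
    | succ i =>
      cases j with
      | zero =>
        rw [Walk.getVert_zero, Walk.getVert_cons_succ] at h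
        exact absurd (h ▸ getVert_mem_support' q i) hq.2
      | succ j =>
        rw [Walk.getVert_cons_succ, Walk.getVert_cons_succ] at h
        have := ih hq.1 (by simpa using hi) (by simpa using hj) h
        omega

lemma getVert_takeUntil' {p : G.Walk u v} (h : a ∈ p.support) {m : ℕ}
    (hm : m ≤ (p.takeUntil a h).length) : (p.takeUntil a h).getVert m = p.getVert m := by
  have hsp := Walk.take_spec p h
  have h2 := congrArg (fun q : G.Walk u v => Walk.getVert q m) hsp
  rw [← h2, Walk.getVert_append]
  rcases lt_or_eq_of_le hm with hm' | hm'
  · rw [if_pos hm']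
  · rw [← hm', if_neg (lt_irrefl _), Nat.sub_self, Walk.getVert_zero, hm', Walk.getVert_length]


lemma isPath_append_of_meet_only_at {p : G.Walk a b} {q : G.Walk b c} (hp : p.IsPath)
    (hq : q.IsPath) (h : ∀ x, x ∈ p.support → x ∈ q.support → x = b) : (p.append q).IsPath := by
  rw [Walk.isPath_def] at hp hq ⊢
  rw [Walk.support_append]
  apply List.Nodup.append hp
  · have := q.support_eq_cons
    rw [this] at hq; exact hq.of_cons
  · intro x hxp hxq
    have hxq' : x ∈ q.support := by rw [q.support_eq_cons]; exact List.mem_cons_of_mem _ hxq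
    have hxb := h x hxp hxq'
    subst hxb
    have : q.support.Nodup := hq
    rw [q.support_eq_cons] at this
    exact (List.nodup_cons.mp this).1 hxq

lemma egirth_le_of_isCycle {w : G.Walk a a} (h : w.IsCycle) : G.egirth ≤ w.length := by
  rw [SimpleGraph.egirth]
  refine iInf_le_of_le a ?_
  refine iInf_le_of_le w ?_
  exact iInf_le _ h

lemma exists_first_meet (r : G.Walk a v) (S : Set V) (h : ∃ y ∈ r.support, y ∈ S) :
    ∃ (x : V) (hx : x ∈ r.support), x ∈ S ∧
      ∀ y ∈ (r.takeUntil x hx).support, y ∈ S → y = x := by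
  induction r with
  | nil =>
    obtain ⟨y, hy, hyS⟩ := h
    rw [Walk.mem_support_nil_iff] at hy
    subst hy
    refine ⟨y, by simp, hyS, ?_⟩
    intro z hz _
    have := Walk.support_takeUntil_subset _ (show y ∈ (Walk.nil : G.Walk y y).support by simp) hz
    rwa [Walk.mem_support_nil_iff] at this
  | cons hadj r ih =>
    rename_i u' a' v'
    by_cases hu : u' ∈ S
    · refine ⟨u', Walk.start_mem_support _, hu, ?_⟩
      intro z hz _
      have heq : (Walk.cons hadj r).takeUntil u' (Walk.start_mem_support _) = Walk.nil := by
        simp [Walk.takeUntil]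
      rw [heq] at hz
      rwa [Walk.mem_support_nil_iff] at hz
    · obtain ⟨y, hy, hyS⟩ := h
      have hy' : y ∈ r.support := by
        cases hy with
        | head => exact absurd hyS hu
        | tail _ h => exact h
      obtain ⟨x, hx, hxS, hmin⟩ := ih ⟨y, hy', hyS⟩
      have hne : u' ≠ x := fun hh => hu (hh ▸ hxS)
      refine ⟨x, by simp [hx], hxS, ?_⟩
      intro z hz hzS
      have heq : (Walk.cons hadj r).takeUntil x (by simp [hx])
          = Walk.cons hadj (r.takeUntil x hx) := by
        simp [Walk.takeUntil, hne]
      rw [heq, Walk.support_cons] at hz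
      cases hz with
      | head => exact absurd hzS hu
      | tail _ h => exact hmin z h hzS

lemma walk_eq_of_lt_egirth :
    ∀ (n : ℕ) {u v : V} (p q : G.Walk u v), p.IsPath → q.IsPath →
      p.length + q.length ≤ n → (n : ℕ∞) < G.egirth → p = q := by
  intro n
  induction n using Nat.strong_induction_on with
  | _ n ih =>
  intro u v p q hp hq hlen hg
  cases p with
  | nil => exact ((Walk.isPath_iff_eq_nil (p := q)).mp hq).symm
  | @cons _ a _ hadj p' =>
    have hpp := (Walk.cons_isPath_iff hadj p').mp hp
    cases q with
    | nil => exact absurd hp (by simp [Walk.isPath_iff_eq_nil])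
    | @cons _ b _ hq0 q0 =>
      have hqq := (Walk.cons_isPath_iff hq0 q0).mp hq
      by_cases hab : a = b
      · subst hab
        have hlt : p'.length + q0.length < n := by
          simp [Walk.length_cons] at hlen; omega
        have : p' = q0 := ih _ hlt p' q0 hpp.1 hqq.1 le_rfl
          (lt_of_le_of_lt (by exact_mod_cast Nat.le_of_lt hlt) hg)
        rw [this]
      · exfalso
        set q : G.Walk u v := Walk.cons hq0 q0 with hqdef
        have hq' : q.IsPath := hq
        have hmeet : ∃ y ∈ p'.support, y ∈ {y : V | y ∈ q.support} := by
          exact ⟨v, Walk.end_mem_support _, Walk.end_mem_support _⟩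
        obtain ⟨x, hx, hxq, hmin⟩ := exists_first_meet p' _ hmeet
        have hxq : x ∈ q.support := hxq
        set p1 := p'.takeUntil x hx with hp1
        set q1 := q.takeUntil x hxq with hq1
        have hp1path : p1.IsPath := hpp.1.takeUntil hx
        have hq1path : q1.IsPath := hq'.takeUntil hxq
        have hWpath : (p1.append q1.reverse).IsPath := by
          apply isPath_append_of_meet_only_at hp1path hq1path.reverse
          intro t ht htq
          refine hmin t ht ?_
          rw [Walk.support_reverse, List.mem_reverse] at htq
          exact Walk.support_takeUntil_subset _ _ htq
        have hCyc : (Walk.cons hadj (p1.append q1.reverse)).IsCycle := by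
          rw [Walk.cons_isCycle_iff]
          refine ⟨hWpath, ?_⟩
          intro he
          rw [Walk.edges_append, List.mem_append] at he
          cases he with
          | inl h1 =>
            have := Walk.fst_mem_support_of_mem_edges p' (Walk.edges_takeUntil_subset _ _ h1)
            exact hpp.2 this
          | inr h2 =>
            rw [Walk.edges_reverse, List.mem_reverse] at h2
            have h3 := Walk.edges_takeUntil_subset _ hxq h2
            rw [hqdef, Walk.edges_cons, List.mem_cons] at h3
            cases h3 with
            | inl h4 =>
              have h5 : a = b ∨ a = u := by
                have := Sym2.eq_iff.mp h4; tauto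
              cases h5 with
              | inl h6 => exact hab h6
              | inr h6 => exact G.irrefl (h6 ▸ hadj)
            | inr h4 =>
              exact hqq.2 (Walk.fst_mem_support_of_mem_edges q0 h4)
        have hlenC : (Walk.cons hadj (p1.append q1.reverse)).length ≤ n := by
          have h1 : p1.length ≤ p'.length := Walk.length_takeUntil_le _ _
          have h2 : q1.length ≤ q.length := Walk.length_takeUntil_le _ _
          simp only [Walk.length_cons, Walk.length_append, Walk.length_reverse]
          have hq0len : q.length = q0.length + 1 := by rw [hqdef]; simp
          simp [Walk.length_cons, hqdef] at hlen
          omega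
        have := egirth_le_of_isCycle hCyc
        have h2 : (↑(Walk.cons hadj (p1.append q1.reverse)).length : ℕ∞) ≤ (n : ℕ∞) := by
          exact_mod_cast hlenC
        exact absurd (lt_of_le_of_lt (le_trans this h2) hg) (lt_irrefl _)



/-- a path within a path between two of its support vertices -/
lemma exists_path_between {q : G.Walk a b} (hq : q.IsPath) (hx : x ∈ q.support)
    (hz : z ∈ q.support) :
    ∃ r : G.Walk x z, r.IsPath ∧ r.length ≤ q.length ∧ ∀ y ∈ r.support, y ∈ q.support := by
  by_cases hz2 : z ∈ (q.dropUntil x hx).support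
  · refine ⟨(q.dropUntil x hx).takeUntil z hz2, (hq.dropUntil hx).takeUntil hz2,
      le_trans (Walk.length_takeUntil_le _ _) (Walk.length_dropUntil_le _ _), ?_⟩
    intro y hy
    exact Walk.support_dropUntil_subset _ _ (Walk.support_takeUntil_subset _ _ hy)
  · have hz3 : z ∈ (q.takeUntil x hx).support := by
      have := Walk.take_spec q hx
      rw [← this, Walk.mem_support_append_iff] at hz
      tauto
    have hz4 : z ∈ (q.takeUntil x hx).reverse.support := by
      rwa [Walk.support_reverse, List.mem_reverse]
    refine ⟨((q.takeUntil x hx).reverse).takeUntil z hz4, (hq.takeUntil hx).reverse.takeUntil hz4,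
      ?_, ?_⟩
    · refine le_trans (Walk.length_takeUntil_le _ _) ?_
      rw [Walk.length_reverse]
      exact Walk.length_takeUntil_le _ _
    · intro y hy
      have := Walk.support_takeUntil_subset _ _ hy
      rw [Walk.support_reverse, List.mem_reverse] at this
      exact Walk.support_takeUntil_subset _ _ this

/-- segment of a path `p0` from index `i` to index `j` -/
lemma seg_exists {p0 : G.Walk u w} (hp0 : p0.IsPath) {i j : ℕ} (hij : i ≤ j)
    (hj : j ≤ p0.length) :
    ∃ s : G.Walk (p0.getVert i) (p0.getVert j), s.IsPath ∧ s.length = j - i ∧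
      ∀ y, y ∈ s.support ↔ ∃ k, i ≤ k ∧ k ≤ j ∧ p0.getVert k = y := by
  have hdpath : (p0.drop i).IsPath := isPath_drop' hp0 i
  have hdlen : (p0.drop i).length = p0.length - i := length_drop' p0 i
  have hdget : ∀ m, (p0.drop i).getVert m = p0.getVert (i + m) := fun m => getVert_drop' p0 i m
  have hjmem : p0.getVert j ∈ (p0.drop i).support := by
    rw [Walk.mem_support_iff_exists_getVert]
    exact ⟨j - i, by rw [hdget, Nat.add_sub_cancel' hij], by omega⟩
  have hslen : ((p0.drop i).takeUntil (p0.getVert j) hjmem).length = j - i := by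
    have h1 : ((p0.drop i).takeUntil (p0.getVert j) hjmem).length ≤ (p0.drop i).length :=
      Walk.length_takeUntil_le _ _
    have h2 : (p0.drop i).getVert ((p0.drop i).takeUntil (p0.getVert j) hjmem).length
        = p0.getVert j := by
      rw [← getVert_takeUntil' hjmem (le_refl _), Walk.getVert_length]
    have h3 : (p0.drop i).getVert (j - i) = p0.getVert j := by
      rw [hdget, Nat.add_sub_cancel' hij]
    exact isPath_getVert_inj hdpath h1 (by omega) (h2.trans h3.symm)
  have hsget : ∀ m, m ≤ j - i →
      ((p0.drop i).takeUntil (p0.getVert j) hjmem).getVert m = p0.getVert (i + m) := by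
    intro m hm
    rw [getVert_takeUntil' hjmem (by omega), hdget]
  refine ⟨(p0.drop i).takeUntil (p0.getVert j) hjmem, IsPath.takeUntil hdpath hjmem, hslen, ?_⟩
  intro y
  rw [Walk.mem_support_iff_exists_getVert, hslen]
  constructor
  · rintro ⟨m, hm1, hm2⟩
    exact ⟨i + m, by omega, by omega, by rw [← hsget m hm2, hm1]⟩
  · rintro ⟨k, hk1, hk2, hk3⟩
    exact ⟨k - i, by rw [hsget _ (by omega), Nat.add_sub_cancel' hk1, hk3], by omega⟩

end Aux

open SimpleGraph Walk in
/-- If `G` has girth greater than `3l`, every intersecting family of paths of length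
at most `l` is a star. -/

theorem girth_intersecting_paths_star {V : Type*} [Fintype V] [DecidableEq V]
    (G : SimpleGraph V) (l : ℕ) (hg : 3 * (l : ℕ∞) < G.egirth)
    (F : Finset (Finset V)) (hF : F.Nonempty)
    (hpath : ∀ s ∈ F, IsShortPathSet G l s)
    (hint : ∀ A ∈ F, ∀ B ∈ F, (A ∩ B).Nonempty) :
    ∃ v : V, ∀ A ∈ F, v ∈ A := by
  classical
  obtain ⟨A0, hA0F⟩ := hF
  obtain ⟨u0, w0, p0, hp0, hp0l, hA0s⟩ := hpath A0 hA0F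
  have h3l : ∀ n : ℕ, n ≤ 3 * l → (n : ℕ∞) < G.egirth := by
    intro n hn
    refine lt_of_le_of_lt ?_ hg
    rw [show (3 : ℕ∞) * (l : ℕ∞) = ((3 * l : ℕ) : ℕ∞) by push_cast; ring]
    exact_mod_cast hn
  -- nonemptiness of index sets
  have hne : ∀ B ∈ F, {i | i ≤ p0.length ∧ p0.getVert i ∈ B}.Nonempty := by
    intro B hB
    obtain ⟨z, hz⟩ := hint A0 hA0F B hB
    rw [Finset.mem_inter] at hz
    have hzA : z ∈ p0.support := by
      have := hz.1; rw [hA0s] at this; exact List.mem_toFinset.mp this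
    obtain ⟨n, hn1, hn2⟩ := Walk.mem_support_iff_exists_getVert.mp hzA
    exact ⟨n, hn2, hn1 ▸ hz.2⟩
  -- interval property
  have key1 : ∀ B ∈ F, ∀ i k j : ℕ, i ≤ k → k ≤ j → j ≤ p0.length →
      p0.getVert i ∈ B → p0.getVert j ∈ B → p0.getVert k ∈ B := by
    intro B hB i k j hik hkj hj hiB hjB
    obtain ⟨uB, wB, qB, hqB, hqBl, hBs⟩ := hpath B hB
    have hxB : p0.getVert i ∈ qB.support := List.mem_toFinset.mp (hBs ▸ hiB)
    have hyB : p0.getVert j ∈ qB.support := List.mem_toFinset.mp (hBs ▸ hjB)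
    obtain ⟨r, hrp, hrl, hrs⟩ := exists_path_between hqB hxB hyB
    obtain ⟨s, hsp, hsl, hss⟩ := seg_exists hp0 (le_trans hik hkj) hj
    have hsr : s = r := by
      refine walk_eq_of_lt_egirth (3 * l) s r hsp hrp (by omega) (h3l _ le_rfl)
    have hks : p0.getVert k ∈ s.support := (hss _).mpr ⟨k, hik, hkj, rfl⟩
    rw [hsr] at hks
    rw [hBs]
    exact List.mem_toFinset.mpr (hrs _ hks)
  -- crossing property
  have key2 : ∀ B ∈ F, ∀ C ∈ F, ∀ i j : ℕ, i ≤ j → j ≤ p0.length →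
      p0.getVert i ∈ B → p0.getVert j ∈ C →
      ∃ k, i ≤ k ∧ k ≤ j ∧ p0.getVert k ∈ B ∧ p0.getVert k ∈ C := by
    intro B hB C hC i j hij hj hiB hjC
    obtain ⟨uB, wB, qB, hqB, hqBl, hBs⟩ := hpath B hB
    obtain ⟨uC, wC, qC, hqC, hqCl, hCs⟩ := hpath C hC
    obtain ⟨z0, hz0⟩ := hint B hB C hC
    rw [Finset.mem_inter] at hz0
    set T : Set ℕ := {n | ∃ z, (z ∈ B ∧ z ∈ C) ∧ ∃ r : G.Walk (p0.getVert i) z,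
      r.IsPath ∧ r.length = n ∧ r.length ≤ l ∧ ∀ t ∈ r.support, t ∈ qB.support} with hT
    have hTne : T.Nonempty := by
      obtain ⟨r0, hr0p, hr0l, hr0s⟩ := exists_path_between hqB
        (List.mem_toFinset.mp (hBs ▸ hiB)) (List.mem_toFinset.mp (hBs ▸ hz0.1))
      exact ⟨r0.length, z0, hz0, r0, hr0p, rfl, le_trans hr0l hqBl, hr0s⟩
    obtain ⟨z, ⟨hzB, hzC⟩, r1, hr1p, hr1n, hr1l, hr1s⟩ := Nat.sInf_mem hTne
    obtain ⟨r2, hr2p, hr2l, hr2s⟩ := exists_path_between hqC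
      (List.mem_toFinset.mp (hCs ▸ hzC)) (List.mem_toFinset.mp (hCs ▸ hjC))
    have hWp : (r1.append r2).IsPath := by
      apply isPath_append_of_meet_only_at hr1p hr2p
      intro t ht1 ht2
      by_contra htz
      have htB : t ∈ B := by rw [hBs]; exact List.mem_toFinset.mpr (hr1s _ ht1)
      have htC : t ∈ C := by rw [hCs]; exact List.mem_toFinset.mpr (hr2s _ ht2)
      have hmem : (r1.takeUntil t ht1).length ∈ T := by
        refine ⟨t, ⟨htB, htC⟩, r1.takeUntil t ht1, hr1p.takeUntil ht1, rfl,
          le_trans (Walk.length_takeUntil_le _ _) hr1l, ?_⟩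
        intro y hy
        exact hr1s _ (Walk.support_takeUntil_subset _ _ hy)
      have hle := Nat.sInf_le hmem
      have hsplit : (r1.takeUntil t ht1).length + (r1.dropUntil t ht1).length = r1.length := by
        have := congrArg Walk.length (Walk.take_spec r1 ht1)
        rwa [Walk.length_append] at this
      have hdrop0 : (r1.dropUntil t ht1).length = 0 := by omega
      exact htz (Walk.eq_of_length_eq_zero hdrop0)
    obtain ⟨s, hsp, hsl, hss⟩ := seg_exists hp0 hij hj
    have hsW : s = r1.append r2 := by
      refine walk_eq_of_lt_egirth (3 * l) s _ hsp hWp ?_ (h3l _ le_rfl)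
      rw [Walk.length_append]
      omega
    have hzW : z ∈ (r1.append r2).support := by
      rw [Walk.mem_support_append_iff]
      exact Or.inl (Walk.end_mem_support r1)
    rw [← hsW] at hzW
    obtain ⟨k, hk1, hk2, hk3⟩ := (hss _).mp hzW
    exact ⟨k, hk1, hk2, hk3 ▸ hzB, hk3 ▸ hzC⟩
  -- conclusion: Helly via leftmost indices
  set a : Finset V → ℕ := fun B => sInf {i | i ≤ p0.length ∧ p0.getVert i ∈ B} with ha
  obtain ⟨Bs, hBsF, hBsm⟩ := Finset.exists_mem_eq_sup' ⟨A0, hA0F⟩ a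
  have hmBs : a Bs ≤ p0.length ∧ p0.getVert (a Bs) ∈ Bs := Nat.sInf_mem (hne Bs hBsF)
  refine ⟨p0.getVert (a Bs), ?_⟩
  intro C hC
  have haCmem : a C ≤ p0.length ∧ p0.getVert (a C) ∈ C := Nat.sInf_mem (hne C hC)
  have haC : a C ≤ a Bs := by
    rw [← hBsm]
    exact Finset.le_sup' a hC
  by_cases hcase : ∃ k, a Bs ≤ k ∧ k ≤ p0.length ∧ p0.getVert k ∈ C
  · obtain ⟨k, hk1, hk2, hk3⟩ := hcase
    exact key1 C hC (a C) (a Bs) k haC hk1 hk2 haCmem.2 hk3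
  · exfalso
    obtain ⟨k, hk1, hk2, hk3, hk4⟩ :=
      key2 C hC Bs hBsF (a C) (a Bs) haC hmBs.1 haCmem.2 hmBs.2
    have hk5 : a Bs ≤ k := Nat.sInf_le ⟨le_trans hk2 hmBs.1, hk4⟩
    exact hcase ⟨k, hk5, le_trans hk2 hmBs.1, hk3⟩
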